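/- arXiv:1301.1248 — 3 statements merged into one kernel-verified Lean document; each statement's English description precedes it below -/
import Mathlib

section
/- Let G be a finite abelian group of order n over the complex numbers. The determinant of the group matrix A_G = (X_{τ⁻¹σ})_{τ,σ∈G} equals the product over all characters χ of G of the linear forms Σ_{σ∈G} χ(σ) X_σ: det A_G = Π_{χ∈Ĝ} Σ_{σ∈G} χ(σ) X_σ. -/
open Finset Matrix

private lemma char_orthogonality {G : Type*} [CommGroup G] [Fintype G]
    (χ ψ : G →* ℂˣ) :
    ∑ τ : G, ((χ τ⁻¹ : ℂ) * (ψ τ : ℂ)) =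
      if χ = ψ then (Fintype.card G : ℂ) else 0 := by
  classical
  have hsum : ∑ τ : G, ((χ τ⁻¹ : ℂ) * (ψ τ : ℂ))
      = ∑ τ : G, ((Units.coeHom ℂ).comp (χ⁻¹ * ψ)) τ := by
    refine Finset.sum_congr rfl fun τ _ => ?_
    simp [map_inv]
  rw [hsum, sum_hom_units]
  have hiff : (Units.coeHom ℂ).comp (χ⁻¹ * ψ) = 1 ↔ χ = ψ := by
    constructor
    · intro h
      ext g
      have hg := DFunLike.congr_fun h g
      simp only [MonoidHom.coe_comp, Function.comp_apply, Units.coeHom_apply,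
        MonoidHom.mul_apply, MonoidHom.inv_apply, MonoidHom.one_apply,
        Units.val_eq_one] at hg
      have h1 : (χ g)⁻¹ * ψ g = 1 := hg
      exact congrArg Units.val (inv_mul_eq_one.mp h1)
    · rintro rfl
      ext g
      simp
  by_cases h : χ = ψ
  · rw [if_pos (hiff.mpr h), if_pos h]
  · rw [if_neg (fun hc => h (hiff.mp hc)), if_neg h]
    simp

/-- The group determinant factors into the product of the linear forms
`Y_χ = ∑ σ, χ(σ) X_σ` over all characters `χ` of the finite abelian group `G`. -/
theorem group_determinant_factorization
    (G : Type*) [CommGroup G] [Fintype G] [DecidableEq G]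
    [Fintype (G →* ℂˣ)]
    (A : Type*) [CommRing A] [Algebra ℂ A]
    (X : G → A) :
    (Matrix.of fun τ σ : G => X (τ⁻¹ * σ)).det
      = ∏ χ : G →* ℂˣ, ∑ σ : G, ((χ σ : ℂ)) • X σ := by
  classical
  have hexp : NeZero ((Monoid.exponent G : ℂ)) :=
    ⟨Nat.cast_ne_zero.mpr Monoid.exponent_ne_zero_of_finite⟩
  obtain ⟨e⟩ := CommGroup.monoidHom_mulEquiv_of_hasEnoughRootsOfUnity G ℂ
  -- e : (G →* ℂˣ) ≃* G
  set V₀ : Matrix G G ℂ := Matrix.of fun τ i => ((e.symm i) τ : ℂ) with hV₀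
  set W₀ : Matrix G G ℂ := Matrix.of fun i τ => ((e.symm i) τ⁻¹ : ℂ) with hW₀
  have hWV : W₀ * V₀ = (Fintype.card G : ℂ) • 1 := by
    ext i j
    simp only [Matrix.mul_apply, hV₀, hW₀, Matrix.of_apply, Matrix.smul_apply,
      Matrix.one_apply, smul_eq_mul]
    rw [char_orthogonality (e.symm i) (e.symm j)]
    by_cases h : i = j
    · simp [h]
    · have : e.symm i ≠ e.symm j := fun hc => h (e.symm.injective hc)
      simp [h, this]
  have hdetV₀ : IsUnit V₀.det := by
    have h1 : W₀.det * V₀.det = ((Fintype.card G : ℂ)) ^ Fintype.card G := by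
      rw [← Matrix.det_mul, hWV]
      simp [Matrix.det_smul]
    have h2 : ((Fintype.card G : ℂ)) ^ Fintype.card G ≠ 0 := by
      apply pow_ne_zero
      exact_mod_cast Fintype.card_ne_zero
    refine isUnit_iff_ne_zero.mpr fun hz => h2 ?_
    rw [← h1, hz, mul_zero]
  set M : Matrix G G A := Matrix.of fun τ σ : G => X (τ⁻¹ * σ) with hM
  set V : Matrix G G A := (algebraMap ℂ A).mapMatrix V₀ with hV
  set D : G → A := fun i => ∑ σ : G, (((e.symm i) σ : ℂ)) • X σ with hD
  have hMV : M * V = V * Matrix.diagonal D := by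
    ext τ i
    have lhs : (M * V) τ i
        = ∑ σ : G, X (τ⁻¹ * σ) * algebraMap ℂ A ((e.symm i) σ : ℂ) := by
      simp [Matrix.mul_apply, hM, hV, hV₀]
    have rhs : (V * Matrix.diagonal D) τ i
        = algebraMap ℂ A ((e.symm i) τ : ℂ) * D i := by
      simp [Matrix.mul_diagonal, hV, hV₀]
    rw [lhs, rhs]
    rw [← Equiv.sum_comp (Equiv.mulLeft τ) (fun σ => X (τ⁻¹ * σ) * algebraMap ℂ A ((e.symm i) σ : ℂ))]
    simp only [Equiv.coe_mulLeft, inv_mul_cancel_left]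
    rw [hD, Finset.mul_sum]
    refine Finset.sum_congr rfl fun σ _ => ?_
    rw [(e.symm i).map_mul, Units.val_mul, (algebraMap ℂ A).map_mul, Algebra.smul_def]
    ring
  have hdetV : IsUnit V.det := by
    rw [hV, ← RingHom.map_det]
    exact hdetV₀.map (algebraMap ℂ A)
  have key : V.det * M.det = V.det * ∏ i : G, D i := by
    have := congrArg Matrix.det hMV
    rw [Matrix.det_mul, Matrix.det_mul, Matrix.det_diagonal] at this
    rw [mul_comm] at this
    exact this
  have hMdet : M.det = ∏ i : G, D i := hdetV.mul_left_cancel key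
  rw [show (Matrix.of fun τ σ : G => X (τ⁻¹ * σ)).det = M.det from rfl, hMdet]
  exact Equiv.prod_comp e.symm.toEquiv (fun χ : G →* ℂˣ => ∑ σ : G, ((χ σ : ℂ)) • X σ)
end

section
/- Let ζ be a primitive n-th root of unity in a field F. The determinant of the matrix P = (ζ^{ij})_{0≤i,j≤n−1} equals n times the determinant of the (n−1)×(n−1) matrix (ζ^{ij})_{1≤i,j≤n−1}. -/
/-- `det (ζ^{ij})_{0 ≤ i,j ≤ n-1} = n ⬝ det (ζ^{ij})_{1 ≤ i,j ≤ n-1}`. -/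
theorem det_eq_n_mul_minor_det
    (F : Type*) [Field F] (n : ℕ) (hn : 1 ≤ n) (hchar : (n : F) ≠ 0)
    (ζ : F) (hζ : IsPrimitiveRoot ζ n) :
    (Matrix.of fun i j : Fin n => ζ ^ ((i : ℕ) * (j : ℕ))).det
      = (n : F) *
        (Matrix.of fun i j : Fin (n - 1) =>
          ζ ^ (((i : ℕ) + 1) * ((j : ℕ) + 1))).det := by
  obtain ⟨m, rfl⟩ : ∃ m, n = m + 1 := ⟨n - 1, (Nat.succ_pred_eq_of_pos hn).symm⟩
  set M : Matrix (Fin (m + 1)) (Fin (m + 1)) F :=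
    Matrix.of fun i j : Fin (m + 1) => ζ ^ ((i : ℕ) * (j : ℕ)) with hM
  -- sum of rows
  have hrow : ∀ j : Fin (m + 1),
      (∑ i : Fin (m + 1), M i) j = if j = 0 then ((m + 1 : ℕ) : F) else 0 := by
    intro j
    erw [Finset.sum_apply]; simp only [hM, Matrix.of_apply]
    rcases eq_or_ne j 0 with rfl | hj
    · simp
    · have h1 : ζ ^ (j : ℕ) ≠ 1 := by
        intro h
        have := hζ.pow_ne_one_of_pos_of_lt (Fin.val_ne_zero_iff.mpr hj) j.is_lt
        exact this h
      have h2 : (ζ ^ (j : ℕ)) ^ (m + 1) = 1 := by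
        rw [← pow_mul, mul_comm, pow_mul, hζ.pow_eq_one, one_pow]
      have : ∑ i : Fin (m + 1), (ζ ^ (j : ℕ)) ^ (i : ℕ) = 0 := by
        rw [Fin.sum_univ_eq_sum_range fun i => (ζ ^ (j : ℕ)) ^ i,
          geom_sum_eq h1, h2, sub_self, zero_div]
      simpa [hj, pow_mul, mul_comm] using this
  have key : (M.updateRow 0 (∑ i, M i)).det = M.det := by
    have : (∑ i : Fin (m + 1), M i) = ∑ i : Fin (m + 1), (1 : F) • M i := by simp
    rw [this, Matrix.det_updateRow_sum]
    simp
  rw [← key, Matrix.det_succ_row_zero]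
  rw [Finset.sum_eq_single 0]
  · have h0 : (M.updateRow 0 (∑ i, M i)) 0 0 = ((m + 1 : ℕ) : F) := by
      rw [Matrix.updateRow_self, hrow]; simp
    rw [h0]
    simp only [Fin.val_zero, pow_zero, one_mul]
    congr 1
  · intro j _ hj
    have : (M.updateRow 0 (∑ i, M i)) 0 j = 0 := by
      rw [Matrix.updateRow_self, hrow, if_neg hj]
    rw [this]; ring
  · simp
end

section
/- Blahut-type theorem for finite abelian groups: let G be a finite abelian group of order n, F a field containing a primitive n-th root of unity (char F ∤ n), b ∈ F^G, and B = F(b) ∈ F^{Ĝ} its finite Fourier transform B_χ = Σ_σ χ(σ) b_σ. Then the Hamming weight of b (the number of σ ∈ G with b_σ ≠ 0) equals the rank of the n×n matrix M̂(B) = (B_{ψ⁻¹χ})_{χ,ψ∈Ĝ}. -/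
/-- Auxiliary: the sum over a finite commutative group of a nontrivial homomorphism
into the units of a field is zero. -/
lemma blahut_aux_sum_eq_zero {F : Type*} [Field F] {H : Type*} [CommGroup H] [Fintype H]
    (φ : H →* Fˣ) (h : ∃ τ, φ τ ≠ 1) : ∑ σ : H, (φ σ : F) = 0 := by
  obtain ⟨τ, hτ⟩ := h
  have h1 : (φ τ : F) * ∑ σ : H, (φ σ : F) = ∑ σ : H, (φ σ : F) := by
    rw [Finset.mul_sum]
    refine Fintype.sum_equiv (Equiv.mulLeft τ) _ _ fun σ => ?_
    simp [map_mul]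
  have h2 : ((φ τ : F) - 1) * ∑ σ : H, (φ σ : F) = 0 := by
    rw [sub_mul, one_mul, h1, sub_self]
  have h3 : (φ τ : F) - 1 ≠ 0 := by
    intro h
    exact hτ (Units.ext (by simpa using sub_eq_zero.mp h))
  exact (mul_eq_zero.mp h2).resolve_left h3

/-- Blahut-type theorem: the Hamming weight of `b ∈ F^G` equals the rank of the
matrix `M̂(B) = (B_{ψ⁻¹χ})_{χ,ψ}`, where `B` is the finite Fourier transform of `b`. -/
theorem blahut_hamming_weight_eq_rank
    (F : Type*) [Field F] (G : Type*) [CommGroup G] [Fintype G]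
    [Fintype (G →* Fˣ)] [DecidableEq (G →* Fˣ)]
    (hroot : ∃ ζ : F, IsPrimitiveRoot ζ (Fintype.card G))
    (hchar : (Fintype.card G : F) ≠ 0)
    (b : G → F) [DecidablePred fun σ : G => b σ ≠ 0] (B : (G →* Fˣ) → F)
    (hB : ∀ χ : G →* Fˣ, B χ = ∑ σ : G, (χ σ : F) * b σ)
    (M : Matrix (G →* Fˣ) (G →* Fˣ) F)
    (hM : ∀ χ ψ : G →* Fˣ, M χ ψ = B (ψ⁻¹ * χ)) :
    (Finset.univ.filter fun σ : G => b σ ≠ 0).card = M.rank := by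
  classical
  have hpos : 0 < Fintype.card G := Fintype.card_pos
  have : NeZero (Fintype.card G) := ⟨hpos.ne'⟩
  have hero : HasEnoughRootsOfUnity F (Fintype.card G) := ⟨hroot, inferInstance⟩
  have herz : HasEnoughRootsOfUnity F (Monoid.exponent G) :=
    HasEnoughRootsOfUnity.of_dvd F Group.exponent_dvd_card
  -- separation of points by characters
  have hsep : ∀ g : G, g ≠ 1 → ∃ χ : G →* Fˣ, χ g ≠ 1 := fun g hg =>
    CommGroup.exists_apply_ne_one_of_hasEnoughRootsOfUnity G F hg
  -- the dual group has the same cardinality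
  have hcard : Fintype.card (G →* Fˣ) = Fintype.card G :=
    Fintype.card_congr (CommGroup.monoidHom_mulEquiv_of_hasEnoughRootsOfUnity G F).some.toEquiv
  set n : F := (Fintype.card G : F) with hn
  -- the character matrices
  set A : Matrix (G →* Fˣ) G F := fun χ σ => (χ σ : F) with hA
  set C : Matrix G (G →* Fˣ) F := fun σ ψ => (ψ σ : F)⁻¹ with hC
  set D : Matrix G G F := Matrix.diagonal b with hD
  -- orthogonality relations
  have hAC : A * C = n • 1 := by
    ext χ ψ
    rw [Matrix.mul_apply]
    have hterm : ∀ σ : G, A χ σ * C σ ψ = ((ψ⁻¹ * χ) σ : F) := fun σ => by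
      simp [hA, hC, Units.val_inv_eq_inv_val, mul_comm]
    simp only [hterm]
    by_cases h : χ = ψ
    · subst h
      simp [Matrix.one_apply, hn]
    · have hne : ψ⁻¹ * χ ≠ 1 := by
        intro hh
        exact h (inv_mul_eq_one.mp hh).symm
      have hex : ∃ τ, (ψ⁻¹ * χ) τ ≠ 1 := by
        by_contra hall
        push_neg at hall
        exact hne (MonoidHom.ext fun x => hall x)
      rw [blahut_aux_sum_eq_zero _ hex]
      simp [Matrix.one_apply, Ne.symm h, h]
  have hCA : C * A = n • 1 := by
    ext σ τ
    rw [Matrix.mul_apply]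
    have hterm : ∀ χ : G →* Fˣ, C σ χ * A χ τ = (χ (σ⁻¹ * τ) : F) := fun χ => by
      simp [hA, hC, Units.val_inv_eq_inv_val]
    simp only [hterm]
    by_cases h : σ = τ
    · subst h
      simp [Matrix.one_apply, hn, hcard]
    · have hne : σ⁻¹ * τ ≠ 1 := by
        intro hh
        exact h (inv_mul_eq_one.mp hh)
      obtain ⟨χ₀, hχ₀⟩ := hsep _ hne
      -- evaluation homomorphism at σ⁻¹ * τ
      let ev : (G →* Fˣ) →* Fˣ :=
        { toFun := fun χ => χ (σ⁻¹ * τ), map_one' := rfl, map_mul' := fun χ ψ => rfl }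
      have := blahut_aux_sum_eq_zero (F := F) ev ⟨χ₀, hχ₀⟩
      rw [show (∑ χ : G →* Fˣ, (χ (σ⁻¹ * τ) : F)) = ∑ χ : G →* Fˣ, (ev χ : F) from rfl, this]
      simp [Matrix.one_apply, h]
  -- factorization of M
  have hMfact : M = A * (D * C) := by
    ext χ ψ
    rw [hM, hB, Matrix.mul_apply]
    refine Finset.sum_congr rfl fun σ _ => ?_
    rw [hD, Matrix.diagonal_mul]
    simp only [hA, hC]
    have : ((ψ⁻¹ * χ) σ : F) = (ψ σ : F)⁻¹ * (χ σ : F) := by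
      simp [Units.val_inv_eq_inv_val]
    rw [this]
    ring
  -- rank inequalities
  have h1 : M.rank ≤ D.rank := by
    calc M.rank = (A * (D * C)).rank := by rw [hMfact]
    _ ≤ (D * C).rank := Matrix.rank_mul_le_right _ _
    _ ≤ D.rank := Matrix.rank_mul_le_left _ _
  have hsand : C * M * A = (n * n) • D := by
    rw [hMfact, show C * (A * (D * C)) * A = (C * A) * D * (C * A) by
      simp only [Matrix.mul_assoc], hCA]
    rw [Matrix.smul_mul, Matrix.one_mul, Matrix.mul_smul, Matrix.mul_one, smul_smul]
  have hnn : n * n ≠ 0 := mul_ne_zero hchar hchar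
  have hrsmul : ((n * n) • D).rank = D.rank := by
    have hd : (n * n) • D = Matrix.diagonal fun σ => (n * n) * b σ := by
      rw [hD, ← Matrix.diagonal_smul]
      congr 1
    rw [hd, hD, Matrix.rank_diagonal, Matrix.rank_diagonal,
      Fintype.card_subtype, Fintype.card_subtype]
    congr 1
    ext σ
    simp [hnn]
  have h2 : D.rank ≤ M.rank := by
    calc D.rank = ((n * n) • D).rank := hrsmul.symm
    _ = (C * M * A).rank := by rw [hsand]
    _ ≤ (C * M).rank := Matrix.rank_mul_le_left _ _
    _ ≤ M.rank := Matrix.rank_mul_le_right _ _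
  have : M.rank = D.rank := le_antisymm h1 h2
  rw [this, hD, Matrix.rank_diagonal, Fintype.card_subtype]
end
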